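/- In the men-proposing Gale-Shapley algorithm, no man can be strictly better-off by unilaterally misreporting his preferences: if man m reports a false strict order while everyone else is truthful, he does not truly prefer his resulting partner to his truthful-run partner. -/

import Mathlib

namespace GS

/-- The `k` most-preferred elements of `S` according to the rank function `rank`
(lower rank = more preferred); if `S` has at most `k` elements this is all of `S`. -/
def topk {α : Type*} [DecidableEq α] (rank : α → ℕ) (k : ℕ) (S : Finset α) : Finset α :=
  S.filter fun a => (S.filter fun b => rank b < rank a).card < k

/-- An instance of the stable-matching problem with `n` women and `n` men.
`mpref m w` is the rank man `m` assigns to woman `w` (lower = more preferred),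
and `wpref w m` is the rank woman `w` assigns to man `m`. -/
structure Instance (n : ℕ) where
  mpref : Fin n → Fin n → ℕ
  wpref : Fin n → Fin n → ℕ
  mprefInj : ∀ m, Function.Injective (mpref m)
  wprefInj : ∀ w, Function.Injective (wpref w)

variable {n : ℕ}

/-- `prefers p a b` : `a` is strictly preferred to `b` under rank function `p`. -/
def prefers (p : Fin n → ℕ) (a b : Fin n) : Prop := p a < p b

/-- Given the current state `avail m` (the women who have not yet rejected man `m`),
the set of women man `m` proposes to tonight: his most-preferred available woman
(a singleton, or empty if no woman is available). -/
def proposals (I : Instance n) (avail : Fin n → Finset (Fin n)) (m : Fin n) :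
    Finset (Fin n) := topk (I.mpref m) 1 (avail m)

/-- The men proposing to woman `w` tonight. -/
def proposersOf (I : Instance n) (avail : Fin n → Finset (Fin n)) (w : Fin n) :
    Finset (Fin n) := Finset.univ.filter fun m => w ∈ proposals I avail m

/-- The men rejected by woman `w` tonight: all of tonight's proposers except
her most-preferred one. -/
def rejectedBy (I : Instance n) (avail : Fin n → Finset (Fin n)) (w : Fin n) :
    Finset (Fin n) := proposersOf I avail w \ topk (I.wpref w) 1 (proposersOf I avail w)

/-- One night of the men-proposing Gale-Shapley algorithm. -/
def step (I : Instance n) (avail : Fin n → Finset (Fin n)) :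
    Fin n → Finset (Fin n) :=
  fun m => (avail m).filter fun w => m ∉ rejectedBy I avail w

/-- `nights I t m` : the set of women who have not rejected man `m` before night `t`
(initially all women). -/
def nights (I : Instance n) (t : ℕ) : Fin n → Finset (Fin n) :=
  (step I)^[t] (fun _ => Finset.univ)

/-- The algorithm has terminated by night `T`: no man is rejected on night `T`. -/
def Stopped (I : Instance n) (T : ℕ) : Prop := step I (nights I T) = nights I T

/-- On night `T`, each man `m` serenades exactly under the window of `μ m`. -/
def MatchesAt (I : Instance n) (T : ℕ) (μ : Fin n ≃ Fin n) : Prop :=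
  ∀ m, proposals I (nights I T) m = {μ m}

/-- The bijection `μ` (from men to women) is the outcome of the men-proposing
Gale-Shapley algorithm on instance `I`: for some night `T` no rejection occurs and
every man `m` is matched with `μ m`. -/
def IsGSMatching (I : Instance n) (μ : Fin n ≃ Fin n) : Prop :=
  ∃ T, Stopped I T ∧ MatchesAt I T μ

/-- Stability of a matching `μ` (men to women): there is no unmatched pair `(w, m)`
each of whom strictly prefers the other to their partner under `μ`. -/
def Stable (I : Instance n) (μ : Fin n ≃ Fin n) : Prop :=
  ¬ ∃ m w, μ m ≠ w ∧ I.mpref m w < I.mpref m (μ m) ∧ I.wpref w m < I.wpref w (μ.symm w)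

/-- The instance in which the women in `L` replace their true preferences by the
false preference rankings `f`, everyone else being truthful. -/
def liarInstance (I : Instance n) (L : Finset (Fin n))
    (f : Fin n → Fin n → ℕ) (hf : ∀ w, Function.Injective (f w)) : Instance n where
  mpref := I.mpref
  wpref := fun w => if w ∈ L then f w else I.wpref w
  mprefInj := I.mprefInj
  wprefInj := fun w => by split_ifs; exacts [hf w, I.wprefInj w]

end GS

namespace GS

/-- The instance in which the single man `m₀` replaces his true preference ranking
by the false ranking `f`, everyone else being truthful. -/
def manLiarInstance {n : ℕ} (I : Instance n) (m₀ : Fin n)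
    (f : Fin n → ℕ) (hf : Function.Injective f) : Instance n where
  mpref := fun m => if m = m₀ then f else I.mpref m
  wpref := I.wpref
  mprefInj := fun m => by split_ifs; exacts [hf, I.mprefInj m]
  wprefInj := I.wprefInj

end GS

namespace GS

variable {n : ℕ}

-- ==================== auxiliary lemmas ====================

lemma mem_topk_one {α : Type*} [DecidableEq α] {rank : α → ℕ} {S : Finset α} {a : α} :
    a ∈ topk rank 1 S ↔ a ∈ S ∧ ∀ b ∈ S, ¬ rank b < rank a := by
  simp [topk, Nat.lt_one_iff, Finset.card_eq_zero, Finset.filter_eq_empty_iff]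

lemma topk_one_subsingleton {α : Type*} [DecidableEq α] {rank : α → ℕ}
    (hinj : Function.Injective rank) {S : Finset α} {a b : α}
    (ha : a ∈ topk rank 1 S) (hb : b ∈ topk rank 1 S) : a = b := by
  rw [mem_topk_one] at ha hb
  exact hinj (Nat.le_antisymm (Nat.not_lt.1 (ha.2 b hb.1)) (Nat.not_lt.1 (hb.2 a ha.1)))

lemma topk_one_nonempty {α : Type*} [DecidableEq α] {rank : α → ℕ} {S : Finset α}
    (h : S.Nonempty) : (topk rank 1 S).Nonempty := by
  obtain ⟨a, ha, hmin⟩ := S.exists_min_image rank h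
  exact ⟨a, mem_topk_one.2 ⟨ha, fun b hb => Nat.not_lt.2 (hmin b hb)⟩⟩

lemma topk_subset {α : Type*} [DecidableEq α] {rank : α → ℕ} {k : ℕ} {S : Finset α} :
    topk rank k S ⊆ S := Finset.filter_subset _ _

variable {I : Instance n}

lemma nights_succ (t : ℕ) : nights I (t + 1) = step I (nights I t) :=
  Function.iterate_succ_apply' _ _ _

lemma avail_succ_subset (t : ℕ) (m : Fin n) : nights I (t + 1) m ⊆ nights I t m := by
  rw [nights_succ]; exact Finset.filter_subset _ _

lemma mem_proposals {av : Fin n → Finset (Fin n)} {m w : Fin n} :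
    w ∈ proposals I av m ↔ w ∈ av m ∧ ∀ w' ∈ av m, ¬ I.mpref m w' < I.mpref m w :=
  mem_topk_one

lemma proposals_eq_singleton {av : Fin n → Finset (Fin n)} {m w : Fin n}
    (h : w ∈ proposals I av m) : proposals I av m = {w} := by
  ext v
  simp only [Finset.mem_singleton]
  constructor
  · intro hv; exact topk_one_subsingleton (I.mprefInj m) hv h
  · rintro rfl; exact h

lemma mem_proposersOf {av : Fin n → Finset (Fin n)} {w m : Fin n} :
    m ∈ proposersOf I av w ↔ w ∈ proposals I av m := by
  simp [proposersOf]

lemma mem_nights_succ {t : ℕ} {m w : Fin n} :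
    w ∈ nights I (t + 1) m ↔ w ∈ nights I t m ∧ m ∉ rejectedBy I (nights I t) w := by
  rw [nights_succ]; exact Finset.mem_filter

/-- A best proposer's available set is unchanged, and he proposes to the same woman. -/
lemma best_persists {t : ℕ} {w m : Fin n}
    (h : m ∈ topk (I.wpref w) 1 (proposersOf I (nights I t) w)) :
    nights I (t + 1) m = nights I t m ∧ proposals I (nights I (t + 1)) m = {w} := by
  have hmP : m ∈ proposersOf I (nights I t) w := topk_subset h
  have hw : w ∈ proposals I (nights I t) m := mem_proposersOf.1 hmP
  have hsing := proposals_eq_singleton hw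
  have havail : nights I (t + 1) m = nights I t m := by
    rw [nights_succ]
    apply Finset.filter_true_of_mem
    intro w' _ hrej
    have h1 : m ∈ proposersOf I (nights I t) w' := (Finset.mem_sdiff.1 hrej).1
    have h2 : w' ∈ proposals I (nights I t) m := mem_proposersOf.1 h1
    rw [hsing, Finset.mem_singleton] at h2
    subst h2
    exact (Finset.mem_sdiff.1 hrej).2 h
  refine ⟨havail, ?_⟩
  have : proposals I (nights I (t + 1)) m = proposals I (nights I t) m := by
    unfold proposals; rw [havail]
  rw [this, hsing]

lemma best_proposer_proposes {t : ℕ} {w m : Fin n}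
    (h : m ∈ topk (I.wpref w) 1 (proposersOf I (nights I t) w)) :
    m ∈ proposersOf I (nights I (t + 1)) w := by
  rw [mem_proposersOf, (best_persists h).2]; exact Finset.mem_singleton_self w

lemma rejected_spec {t : ℕ} {m w : Fin n} (h : m ∈ rejectedBy I (nights I t) w) :
    w ∈ proposals I (nights I t) m ∧
      ∃ b ∈ topk (I.wpref w) 1 (proposersOf I (nights I t) w), I.wpref w b < I.wpref w m := by
  obtain ⟨hp, hnt⟩ := Finset.mem_sdiff.1 h
  have hw := mem_proposersOf.1 hp
  obtain ⟨b, hb⟩ := topk_one_nonempty (S := proposersOf I (nights I t) w) ⟨m, hp⟩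
  refine ⟨hw, b, hb, ?_⟩
  have hex : ∃ b' ∈ proposersOf I (nights I t) w, I.wpref w b' < I.wpref w m := by
    by_contra hc
    push_neg at hc
    exact hnt (mem_topk_one.2 ⟨hp, fun b' hb' => Nat.not_lt.2 (hc b' hb')⟩)
  obtain ⟨b', hb', hlt⟩ := hex
  exact lt_of_le_of_lt (Nat.not_lt.1 ((mem_topk_one.1 hb).2 b' hb')) hlt

lemma best_mono (w : Fin n) :
    ∀ (k : ℕ) {t : ℕ} {b : Fin n},
      b ∈ topk (I.wpref w) 1 (proposersOf I (nights I t) w) →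
      ∃ c ∈ topk (I.wpref w) 1 (proposersOf I (nights I (t + k)) w),
        I.wpref w c ≤ I.wpref w b := by
  intro k
  induction k with
  | zero => intro t b h; exact ⟨b, h, le_refl _⟩
  | succ k ih =>
    intro t b h
    obtain ⟨c, hc, hcle⟩ := ih h
    have hcP : c ∈ proposersOf I (nights I (t + k + 1)) w := best_proposer_proposes hc
    obtain ⟨d, hd⟩ := topk_one_nonempty (S := proposersOf I (nights I (t + k + 1)) w) ⟨c, hcP⟩
    exact ⟨d, hd, le_trans (Nat.not_lt.1 ((mem_topk_one.1 hd).2 c hcP)) hcle⟩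

section Run

variable {T : ℕ} {μ : Fin n ≃ Fin n}

lemma nights_stopped (hst : Stopped I T) (s : ℕ) : nights I (T + s) = nights I T := by
  induction s with
  | zero => rfl
  | succ s ih => rw [show T + (s+1) = (T+s) + 1 from rfl, nights_succ, ih, hst]

lemma nights_T_subset (hst : Stopped I T) (t : ℕ) (m : Fin n) :
    nights I T m ⊆ nights I t m := by
  rcases le_total t T with h | h
  · -- antitone
    have : ∀ d t', nights I (t' + d) m ⊆ nights I t' m := by
      intro d
      induction d with
      | zero => intro t'; exact Finset.Subset.refl _
      | succ d ih =>
        intro t'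
        exact (show nights I (t' + d + 1) m ⊆ nights I (t' + d) m from
          avail_succ_subset _ _).trans (ih t')
    have h2 := this (T - t) t
    rwa [show t + (T - t) = T by omega] at h2
  · rw [show t = T + (t - T) by omega, nights_stopped hst]

lemma final_mem_T (hma : MatchesAt I T μ) (m : Fin n) : μ m ∈ nights I T m := by
  have : μ m ∈ proposals I (nights I T) m := by
    rw [hma m]; exact Finset.mem_singleton_self _
  exact (mem_proposals.1 this).1

lemma final_mem (hst : Stopped I T) (hma : MatchesAt I T μ) (m : Fin n) (t : ℕ) :
    μ m ∈ nights I t m := nights_T_subset hst t m (final_mem_T hma m)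

lemma final_min (hma : MatchesAt I T μ) (m : Fin n) :
    ∀ w ∈ nights I T m, ¬ I.mpref m w < I.mpref m (μ m) := by
  have : μ m ∈ proposals I (nights I T) m := by
    rw [hma m]; exact Finset.mem_singleton_self _
  exact (mem_proposals.1 this).2

lemma rejection_lt_T (hst : Stopped I T) {m w : Fin n} {t : ℕ}
    (h1 : w ∈ nights I t m) (h2 : w ∉ nights I (t + 1) m) : t < T := by
  by_contra hc
  push_neg at hc
  rw [show t + 1 = T + (t + 1 - T) by omega, nights_stopped hst] at h2
  rw [show t = T + (t - T) by omega, nights_stopped hst] at h1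
  exact h2 h1

lemma proposersOf_T (hma : MatchesAt I T μ) (w : Fin n) :
    proposersOf I (nights I T) w = {μ.symm w} := by
  ext m
  rw [mem_proposersOf, hma m, Finset.mem_singleton, Finset.mem_singleton]
  constructor
  · intro h; rw [h, Equiv.symm_apply_apply]
  · rintro rfl; exact (Equiv.apply_symm_apply μ w).symm

/-- Key invariant: if `w` has rejected `m` by night `t`, then `w` currently has a
proposer she strictly prefers to `m`. -/
lemma invariant (t : ℕ) : ∀ m w : Fin n, w ∉ nights I t m →
    ∃ m' ∈ proposersOf I (nights I t) w, I.wpref w m' < I.wpref w m := by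
  induction t with
  | zero => intro m w hw; exact absurd (Finset.mem_univ w) hw
  | succ t ih =>
    intro m w hw
    by_cases hwt : w ∈ nights I t m
    · have hrej : m ∈ rejectedBy I (nights I t) w := by
        by_contra hc
        exact hw (mem_nights_succ.2 ⟨hwt, hc⟩)
      obtain ⟨-, b, hb, hlt⟩ := rejected_spec hrej
      exact ⟨b, best_proposer_proposes hb, hlt⟩
    · obtain ⟨m', hm', hlt⟩ := ih m w hwt
      obtain ⟨b, hb⟩ := topk_one_nonempty (S := proposersOf I (nights I t) w) ⟨m', hm'⟩
      have hble : I.wpref w b ≤ I.wpref w m' := Nat.not_lt.1 ((mem_topk_one.1 hb).2 m' hm')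
      exact ⟨b, best_proposer_proposes hb, lt_of_le_of_lt hble hlt⟩

lemma gs_stable (hst : Stopped I T) (hma : MatchesAt I T μ) : Stable I μ := by
  rintro ⟨m, w, hne, hm, hw⟩
  have hwnot : w ∉ nights I T m := fun h => final_min hma m w h hm
  obtain ⟨m', hm', hlt⟩ := invariant T m w hwnot
  rw [proposersOf_T hma, Finset.mem_singleton] at hm'
  subst hm'
  exact absurd (hlt.trans hw) (lt_irrefl _)

lemma final_persists (hst : Stopped I T) (hma : MatchesAt I T μ) {m : Fin n} {t : ℕ}
    (h : proposals I (nights I t) m = {μ m}) :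
    proposals I (nights I (t + 1)) m = {μ m} := by
  apply proposals_eq_singleton
  rw [mem_proposals]
  refine ⟨final_mem hst hma m (t + 1), ?_⟩
  intro w' hw'
  have hw't : w' ∈ nights I t m := avail_succ_subset t m hw'
  have : μ m ∈ proposals I (nights I t) m := by rw [h]; exact Finset.mem_singleton_self _
  exact (mem_proposals.1 this).2 w' hw't

lemma final_persists_ge (hst : Stopped I T) (hma : MatchesAt I T μ) {m : Fin n} {t s : ℕ}
    (hts : t ≤ s) (h : proposals I (nights I t) m = {μ m}) :
    proposals I (nights I s) m = {μ m} := by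
  induction s, hts using Nat.le_induction with
  | base => exact h
  | succ s hs ih => exact final_persists hst hma ih

lemma proposes_lt_final (hst : Stopped I T) (hma : MatchesAt I T μ) {m w : Fin n} {t : ℕ}
    (h : w ∈ proposals I (nights I t) m) (hne : w ≠ μ m) :
    I.mpref m w < I.mpref m (μ m) := by
  have h2 := (mem_proposals.1 h).2 (μ m) (final_mem hst hma m t)
  refine lt_of_le_of_ne (Nat.not_lt.1 h2) (fun heq => hne (I.mprefInj m heq))

lemma rejected_exists (hst : Stopped I T) (hma : MatchesAt I T μ) {m w : Fin n}
    (h : I.mpref m w < I.mpref m (μ m)) :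
    ∃ s, s < T ∧ w ∈ nights I s m ∧ w ∉ nights I (s + 1) m := by
  have hex0 : ∃ u, w ∉ nights I u m := ⟨T, fun hh => final_min hma m w hh h⟩
  have hu0 : Nat.find hex0 ≠ 0 := by
    intro h0
    have := Nat.find_spec hex0
    rw [h0] at this
    exact this (Finset.mem_univ w)
  refine ⟨Nat.find hex0 - 1, ?_, ?_, ?_⟩
  · have h1 : w ∈ nights I (Nat.find hex0 - 1) m := by
      by_contra hc
      exact absurd (Nat.find_min hex0 (show Nat.find hex0 - 1 < Nat.find hex0 by omega)) (by simp [hc])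
    have h2 : w ∉ nights I (Nat.find hex0 - 1 + 1) m := by
      rw [show Nat.find hex0 - 1 + 1 = Nat.find hex0 by omega]
      exact Nat.find_spec hex0
    exact rejection_lt_T hst h1 h2
  · by_contra hc
    exact absurd (Nat.find_min hex0 (show Nat.find hex0 - 1 < Nat.find hex0 by omega)) (by simp [hc])
  · rw [show Nat.find hex0 - 1 + 1 = Nat.find hex0 by omega]
    exact Nat.find_spec hex0

end Run

/-- The Blocking Lemma (Gale–Sotomayor / Hwang): if some set of men strictly prefer an
arbitrary matching `ν` to the men-optimal GS matching `O`, then `ν` has a blocking pair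
whose man does not strictly prefer `ν` to `O`. -/
lemma blocking {I : Instance n} {O : Fin n ≃ Fin n} (hO : IsGSMatching I O)
    (ν : Fin n ≃ Fin n) (M' : Finset (Fin n))
    (hM' : ∀ m, m ∈ M' ↔ I.mpref m (ν m) < I.mpref m (O m)) (hne : M'.Nonempty) :
    ∃ m w, m ∉ M' ∧ ν m ≠ w ∧ I.mpref m w < I.mpref m (ν m) ∧
      I.wpref w m < I.wpref w (ν.symm w) := by
  obtain ⟨T, hst, hma⟩ := hO
  by_cases hcase : M'.image ν = M'.image O
  · -- Case 2 : ν(M') = O(M'). Run-based argument.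
    have hex : ∀ m : Fin n, ∃ t, proposals I (nights I t) m = {O m} := fun m => ⟨T, hma m⟩
    obtain ⟨mh, hmhM, hmax⟩ := M'.exists_max_image (fun m => Nat.find (hex m)) hne
    set tS := Nat.find (hex mh) with htS
    -- every rejection of a man of M' happens before tS
    have Fact : ∀ m ∈ M', ∀ w s, w ∈ nights I s m → w ∉ nights I (s + 1) m → s < tS := by
      intro m hm w s h1 h2
      have hlt : s < Nat.find (hex m) := by
        by_contra hc
        push_neg at hc
        have hprop := final_persists_ge hst hma hc (Nat.find_spec (hex m))
        have hrej : m ∈ rejectedBy I (nights I s) w := by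
          by_contra hc2
          exact h2 (mem_nights_succ.2 ⟨h1, hc2⟩)
        have hw : w ∈ proposals I (nights I s) m := (rejected_spec hrej).1
        rw [hprop, Finset.mem_singleton] at hw
        subst hw
        exact h2 (final_mem hst hma m (s + 1))
      exact lt_of_lt_of_le hlt (hmax m hm)
    set wh := O mh with hwh
    have hwhν : wh ∈ M'.image ν := by rw [hcase]; exact Finset.mem_image_of_mem O hmhM
    obtain ⟨m₁, hm₁M, hνm₁⟩ := Finset.mem_image.1 hwhν
    have hmhne : ν mh ≠ O mh := by
      intro h
      have := (hM' mh).1 hmhM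
      rw [h] at this
      exact lt_irrefl _ this
    have hm₁ne : m₁ ≠ mh := fun h =>
      hmhne (((congrArg ν h).symm.trans hνm₁).trans hwh)
    have hpref₁ : I.mpref m₁ wh < I.mpref m₁ (O m₁) := by
      have := (hM' m₁).1 hm₁M
      rwa [hνm₁] at this
    obtain ⟨s₁, hs₁T, hs₁mem, hs₁not⟩ := rejected_exists hst hma hpref₁
    have hs₁lt : s₁ < tS := Fact m₁ hm₁M wh s₁ hs₁mem hs₁not
    have hrej₁ : m₁ ∈ rejectedBy I (nights I s₁) wh := by
      by_contra hc
      exact hs₁not (mem_nights_succ.2 ⟨hs₁mem, hc⟩)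
    obtain ⟨-, b, hb, hblt⟩ := rejected_spec hrej₁
    obtain ⟨ms, hmstop, hmsle⟩ := best_mono wh (tS - 1 - s₁) hb
    rw [show s₁ + (tS - 1 - s₁) = tS - 1 by omega] at hmstop
    -- mh proposes to wh at tS and is her unique best proposer
    have hpropmh : proposals I (nights I tS) mh = {O mh} := Nat.find_spec (hex mh)
    have hmhP : mh ∈ proposersOf I (nights I tS) wh := by
      rw [mem_proposersOf, hpropmh]; exact Finset.mem_singleton_self _
    have hmhtop : mh ∈ topk (I.wpref wh) 1 (proposersOf I (nights I tS) wh) := by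
      by_contra hc
      have hrej : mh ∈ rejectedBy I (nights I tS) wh := Finset.mem_sdiff.2 ⟨hmhP, hc⟩
      have : wh ∉ nights I (tS + 1) mh := by
        intro hmem
        exact (mem_nights_succ.1 hmem).2 hrej
      exact this (by rw [hwh]; exact final_mem hst hma mh (tS + 1))
    have hmsP : ms ∈ proposersOf I (nights I tS) wh := by
      have := best_proposer_proposes hmstop
      rwa [show tS - 1 + 1 = tS by omega] at this
    have hmsne : ms ≠ mh := by
      intro h
      subst h
      have hPms : wh ∈ proposals I (nights I (tS - 1)) ms := mem_proposersOf.1 (topk_subset hmstop)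
      have := proposals_eq_singleton hPms
      rw [hwh] at this
      exact absurd this (Nat.find_min (hex ms) (show tS - 1 < tS by omega))
    have hmsrej : ms ∈ rejectedBy I (nights I tS) wh :=
      Finset.mem_sdiff.2 ⟨hmsP, fun htop => hmsne (topk_one_subsingleton (I.wprefInj wh) htop hmhtop)⟩
    have hwhmem : wh ∈ nights I tS ms := (mem_proposals.1 (mem_proposersOf.1 hmsP)).1
    have hwhnot : wh ∉ nights I (tS + 1) ms := fun hmem => (mem_nights_succ.1 hmem).2 hmsrej
    have hmsM : ms ∉ M' := fun h => absurd (Fact ms h wh tS hwhmem hwhnot) (lt_irrefl tS)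
    have hνsymm : ν.symm wh = m₁ := by rw [← hνm₁, Equiv.symm_apply_apply]
    refine ⟨ms, wh, hmsM, ?_, ?_, ?_⟩
    · intro h
      have : ms = m₁ := by rw [← hνsymm, ← h, Equiv.symm_apply_apply]
      exact hmsM (this ▸ hm₁M)
    · have h1 : wh ∈ proposals I (nights I (tS - 1)) ms := mem_proposersOf.1 (topk_subset hmstop)
      have hwO : wh ≠ O ms := by
        intro h
        exact hwhnot (by rw [h]; exact final_mem hst hma ms (tS + 1))
      have h2 := proposes_lt_final hst hma h1 hwO
      have h3 : ¬ I.mpref ms (ν ms) < I.mpref ms (O ms) := fun h => hmsM ((hM' ms).2 h)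
      exact lt_of_lt_of_le h2 (Nat.not_lt.1 h3)
    · rw [hνsymm]
      exact lt_of_le_of_lt hmsle hblt
  · -- Case 1 : ν(M') ≠ O(M'). Use stability of O.
    have hstab := gs_stable hst hma
    have hcards : (M'.image O).card ≤ (M'.image ν).card := by
      rw [Finset.card_image_of_injective _ ν.injective, Finset.card_image_of_injective _ O.injective]
    have hsub : ¬ M'.image ν ⊆ M'.image O := fun h => hcase (Finset.eq_of_subset_of_card_le h hcards)
    obtain ⟨w, hwν, hwO⟩ := Finset.not_subset.1 hsub
    obtain ⟨m', hm'M, hm'ν⟩ := Finset.mem_image.1 hwν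
    have hOm : O (O.symm w) = w := O.apply_symm_apply w
    have hmM : O.symm w ∉ M' := fun h => hwO (Finset.mem_image.2 ⟨O.symm w, h, hOm⟩)
    have hm'm : m' ≠ O.symm w := fun h => hmM (h ▸ hm'M)
    have hwne : O m' ≠ w := fun h => hwO (Finset.mem_image.2 ⟨m', hm'M, h⟩)
    have hpref' : I.mpref m' w < I.mpref m' (O m') := by
      have := (hM' m').1 hm'M
      rwa [hm'ν] at this
    have hwp : ¬ I.wpref w m' < I.wpref w (O.symm w) := by
      intro h
      exact hstab ⟨m', w, hwne, hpref', h⟩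
    have hνsymm : ν.symm w = m' := by rw [← hm'ν, Equiv.symm_apply_apply]
    refine ⟨O.symm w, w, hmM, ?_, ?_, ?_⟩
    · intro h
      exact hm'm (ν.injective (hm'ν.trans h.symm))
    · have h1 : ¬ I.mpref (O.symm w) (ν (O.symm w)) < I.mpref (O.symm w) (O (O.symm w)) :=
        fun h => hmM ((hM' _).2 h)
      rw [hOm] at h1
      refine lt_of_le_of_ne (Nat.not_lt.1 h1) ?_
      intro heq
      have : w = ν (O.symm w) := I.mprefInj _ heq
      have h2 : ν m' = ν (O.symm w) := hm'ν.trans this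
      exact hm'm (ν.injective h2)
    · rw [hνsymm]
      refine lt_of_le_of_ne (Nat.not_lt.1 hwp) ?_
      intro heq
      exact hm'm ((I.wprefInj w heq).symm)

end GS

open GS in
/-- Dubins–Freedman: no man can obtain a strictly better partner by unilaterally
misreporting his preferences to the men-proposing Gale-Shapley mechanism. -/
theorem man_cannot_manipulate (n : ℕ) (I : GS.Instance n)
    (m₀ : Fin n) (f : Fin n → ℕ) (hf : Function.Injective f)
    (O N : Fin n ≃ Fin n)
    (hO : IsGSMatching I O) (hN : IsGSMatching (manLiarInstance I m₀ f hf) N) :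
    ¬ prefers (I.mpref m₀) (N m₀) (O m₀) := by
  intro hpref
  classical
  set J := manLiarInstance I m₀ f hf with hJ
  set M' : Finset (Fin n) :=
    Finset.univ.filter (fun m => I.mpref m (N m) < I.mpref m (O m)) with hM'def
  have hM' : ∀ m, m ∈ M' ↔ I.mpref m (N m) < I.mpref m (O m) := by
    intro m; simp [hM'def]
  have hm₀M : m₀ ∈ M' := (hM' m₀).2 hpref
  obtain ⟨m, w, hmM, h1, h2, h3⟩ := blocking hO N M' hM' ⟨m₀, hm₀M⟩
  have hmm₀ : m ≠ m₀ := fun h => hmM (h ▸ hm₀M)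
  obtain ⟨T, hst, hma⟩ := hN
  have hstabN : Stable J N := gs_stable hst hma
  apply hstabN
  refine ⟨m, w, h1, ?_, h3⟩
  have : J.mpref m = I.mpref m := by
    simp [hJ, manLiarInstance, hmm₀]
  rw [this]
  exact h2
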